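/- Let u₂ ∈ S^{d-1}, g₂ ∈ ℝ^d, and η > 0 with η‖g₂‖₂ ≤ 1/2. Let v₂ = Proj_{S^{d-1}}(u₂ + η g₂) = (u₂ + η g₂)/‖u₂ + η g₂‖₂. Then ‖v₂ - u₂ - η(I_d - u₂u₂ᵀ)g₂‖₂ ≤ C η² ‖g₂‖₂² for an absolute constant C. -/

import Mathlib

lemma stmt14_key (r s a t : ℝ) (hr : 1/2 ≤ r) (hs : s * r = 1)
    (hr2 : r^2 = 1 + 2*a + t^2) (ha : |a| ≤ t) (ht : t ≤ 1/2) (ht0 : 0 ≤ t) :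
    |s - 1 + a| + |s - 1| * t ≤ 25 * t^2 := by
  have ha' := abs_le.mp ha
  have hrpos : (0:ℝ) < r := by linarith
  have hspos : 0 < s := by
    rcases lt_trichotomy s 0 with h | h | h
    · nlinarith
    · simp [h] at hs
    · exact h
  have hsle : s ≤ 2 := by nlinarith
  have hrle : r ≤ 3/2 := by nlinarith [sq_nonneg (r - 1 - t)]
  have h1 : |r - 1| ≤ 2*t + t^2 := by
    rw [abs_le]
    constructor
    · nlinarith [sq_nonneg (r - 1 + t)]
    · nlinarith [sq_nonneg (r - 1 - t)]
  have h1' := abs_le.mp h1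
  have h2 : |s - 1| ≤ 5*t := by
    have : s - 1 = s * (1 - r) := by
      have : s * (1 - r) = s - s*r := by ring
      rw [this, hs]
    rw [this, abs_mul, abs_of_pos hspos, abs_sub_comm]
    nlinarith
  have hid : (s - 1 + a) * (r * (1 + r)) = a*(r-1)*(r+2) - t^2 := by
    linear_combination (1+r)*hs - hr2
  have hnum : |a*(r-1)*(r+2) - t^2| ≤ 10*t^2 := by
    have h3 : |a*(r-1)*(r+2)| ≤ 9*t^2 := by
      rw [abs_mul, abs_mul]
      have : |r+2| = r + 2 := abs_of_pos (by linarith)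
      rw [this]
      have hA : |a| * |r - 1| ≤ t * (2*t + t^2) :=
        mul_le_mul ha h1 (abs_nonneg _) ht0
      nlinarith [mul_nonneg (abs_nonneg a) (abs_nonneg (r-1)), hA]
    calc |a*(r-1)*(r+2) - t^2| ≤ |a*(r-1)*(r+2)| + |t^2| := abs_sub _ _
      _ ≤ 9*t^2 + t^2 := by rw [abs_of_nonneg (sq_nonneg t)]; linarith
      _ = 10*t^2 := by ring
  have h4 : |s - 1 + a| * (r * (1 + r)) ≤ 10*t^2 := by
    have hpos : 0 < r * (1 + r) := by nlinarith
    rw [← abs_of_pos hpos, ← abs_mul, hid]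
    exact hnum
  have h5 : |s - 1 + a| ≤ 14*t^2 := by
    nlinarith [abs_nonneg (s - 1 + a)]
  have h6 : |s - 1| * t ≤ 5*t^2 := by nlinarith [abs_nonneg (s-1)]
  linarith [sq_nonneg t]

/-- One step of projected (sphere) gradient descent agrees with one
step of Riemannian gradient descent up to second order: for `‖u₂‖ = 1`, `η > 0`,
`η‖g₂‖ ≤ 1/2` and `v₂ = (u₂ + η g₂)/‖u₂ + η g₂‖`, one has
`‖v₂ - u₂ - η (I - u₂u₂ᵀ) g₂‖ ≤ C η² ‖g₂‖²` for an absolute constant `C`. -/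
theorem stmt14 : ∃ C : ℝ, 0 < C ∧
    ∀ (d : ℕ) (u₂ g₂ : EuclideanSpace ℝ (Fin d)) (η : ℝ),
      ‖u₂‖ = 1 → 0 < η → η * ‖g₂‖ ≤ 1 / 2 →
      ‖(‖u₂ + η • g₂‖⁻¹ • (u₂ + η • g₂)) - u₂
          - η • (g₂ - (inner ℝ u₂ g₂ : ℝ) • u₂)‖ ≤ C * η ^ 2 * ‖g₂‖ ^ 2 := by
  refine ⟨25, by norm_num, ?_⟩
  intro d u g η hu hη hηg
  set t : ℝ := η * ‖g‖ with ht_def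
  have ht0 : 0 ≤ t := mul_nonneg hη.le (norm_nonneg _)
  set a : ℝ := η * (inner ℝ u g : ℝ) with ha_def
  set w := u + η • g with hw
  set r : ℝ := ‖w‖ with hr_def
  have hηg_norm : ‖η • g‖ = t := by
    rw [norm_smul, Real.norm_eq_abs, abs_of_pos hη]
  have hr_ge : 1/2 ≤ r := by
    have := norm_sub_norm_le u (-(η • g))
    simp only [sub_neg_eq_add] at this
    rw [hu, norm_neg, hηg_norm] at this
    calc (1:ℝ)/2 = 1 - 1/2 := by norm_num
    _ ≤ 1 - t := by linarith
    _ ≤ r := this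
  have hr_pos : 0 < r := lt_of_lt_of_le (by norm_num) hr_ge
  have hs : r⁻¹ * r = 1 := inv_mul_cancel₀ hr_pos.ne'
  have hr2 : r^2 = 1 + 2*a + t^2 := by
    have := @norm_add_sq_real (EuclideanSpace ℝ (Fin d)) _ _ u (η • g)
    rw [hu, hηg_norm, inner_smul_right] at this
    rw [hr_def, hw, this, ha_def]; ring
  have ha : |a| ≤ t := by
    rw [ha_def, ht_def, abs_mul, abs_of_pos hη]
    exact mul_le_mul_of_nonneg_left
      ((abs_real_inner_le_norm u g).trans (by rw [hu, one_mul])) hη.le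
  have hkey := stmt14_key r r⁻¹ a t hr_ge hs hr2 ha (by linarith) ht0
  have hrewrite : (r⁻¹ • w) - u - η • (g - (inner ℝ u g : ℝ) • u)
      = (r⁻¹ - 1 + a) • u + (r⁻¹ - 1) • (η • g) := by
    rw [hw, ha_def]
    module
  calc ‖(r⁻¹ • w) - u - η • (g - (inner ℝ u g : ℝ) • u)‖
      ≤ ‖(r⁻¹ - 1 + a) • u‖ + ‖(r⁻¹ - 1) • (η • g)‖ := by
        rw [hrewrite]; exact norm_add_le _ _
    _ = |r⁻¹ - 1 + a| + |r⁻¹ - 1| * t := by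
        rw [norm_smul, norm_smul, hu, hηg_norm, Real.norm_eq_abs, Real.norm_eq_abs, mul_one]
    _ ≤ 25 * t^2 := hkey
    _ = 25 * η^2 * ‖g‖^2 := by rw [ht_def]; ring
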